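/- For all η ∈ A, ξ ∈ H, and φ ∈ A: K̂_{ξ+η}(φ) = K^η_ξ(φ) · exp( −i·θ(η,ξ) − (i/2)·B(ξ,ξ) − (1/4)·g(ξ,ξ) ). -/

import Mathlib

/-- The affine coherent state wave function `K̂_ζ : A → ℂ`,
`K̂_ζ(φ) = exp( (i/2)·θ(ζ, φ−ζ) + (i/2)·θ(φ, φ−ζ) − (1/4)·g(φ−ζ, φ−ζ) )`,
where `g(x,y) = Re ⟪x,y⟫`.  (For `ζ = η` this is also the wave function `α^η`.) -/
noncomputable def Khat {H A : Type*} [NormedAddCommGroup H] [InnerProductSpace ℂ H]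
    [AddTorsor H A] (θ : A → H → ℝ) (ζ φ : A) : ℂ :=
  Complex.exp ((Complex.I / 2) * ((θ ζ (φ -ᵥ ζ) : ℝ) : ℂ)
    + (Complex.I / 2) * ((θ φ (φ -ᵥ ζ) : ℝ) : ℂ)
    - (1/4 : ℂ) * (((inner ℂ (φ -ᵥ ζ) (φ -ᵥ ζ) : ℂ).re : ℝ) : ℂ))

/-- The coherent state wave function `K^η_ξ(φ) := exp( (1/2)·{ξ, φ−η} ) · α^η(φ)`,
where `α^η = K̂_η`. -/
noncomputable def Kbase {H A : Type*} [NormedAddCommGroup H] [InnerProductSpace ℂ H]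
    [AddTorsor H A] (θ : A → H → ℝ) (η : A) (ξ : H) (φ : A) : ℂ :=
  Complex.exp ((1/2 : ℂ) * (inner ℂ ξ (φ -ᵥ η) : ℂ)) * Khat θ η φ

/-- For all `η ∈ A`, `ξ ∈ H`, and `φ ∈ A`:
`K̂_{ξ+η}(φ) = K^η_ξ(φ) · exp( −i·θ(η,ξ) − (i/2)·B(ξ,ξ) − (1/4)·g(ξ,ξ) )`. -/
theorem statement4
    {H A : Type*} [NormedAddCommGroup H] [InnerProductSpace ℂ H] [CompleteSpace H]
    [AddTorsor H A]
    (θ : A → H → ℝ) (hθ : ∀ η : A, IsLinearMap ℝ (θ η))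
    (B : H → H → ℝ)
    (hB₁ : ∀ y : H, IsLinearMap ℝ (fun x => B x y))
    (hB₂ : ∀ x : H, IsLinearMap ℝ (B x))
    (hθB : ∀ (η : A) (ξ ξ' : H), θ (ξ +ᵥ η) ξ' = θ η ξ' + B ξ ξ')
    (hωB : ∀ ξ ξ' : H,
      (1/2 : ℝ) * (inner ℂ ξ ξ' : ℂ).im = (1/2 : ℝ) * (B ξ ξ' - B ξ' ξ)) :
    ∀ (η : A) (ξ : H) (φ : A),
      Khat θ (ξ +ᵥ η) φ =
        Kbase θ η ξ φ *
          Complex.exp (-Complex.I * ((θ η ξ : ℝ) : ℂ)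
            - (Complex.I / 2) * ((B ξ ξ : ℝ) : ℂ)
            - (1/4 : ℂ) * (((inner ℂ ξ ξ : ℂ).re : ℝ) : ℂ)) := by
  intro η ξ φ
  unfold Kbase Khat
  rw [mul_assoc, ← Complex.exp_add, ← Complex.exp_add]
  congr 1
  set u := φ -ᵥ η with hu
  have hvs : φ -ᵥ (ξ +ᵥ η) = u - ξ := by rw [vsub_vadd_eq_vsub_sub]
  rw [hvs]
  have l1 : θ η (u - ξ) = θ η u - θ η ξ := by
    simpa using (IsLinearMap.mk' _ (hθ η)).map_sub u ξ
  have l2 : B ξ (u - ξ) = B ξ u - B ξ ξ := by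
    simpa using (IsLinearMap.mk' _ (hB₂ ξ)).map_sub u ξ
  have h1 : θ (ξ +ᵥ η) (u - ξ) = θ η u - θ η ξ + B ξ u - B ξ ξ := by
    rw [hθB, l1, l2]; ring
  have h2 : θ φ (u - ξ) = θ φ u - θ φ ξ := by
    simpa using (IsLinearMap.mk' _ (hθ φ)).map_sub u ξ
  have h3 : θ φ ξ = θ η ξ + B u ξ := by
    have hφ : φ = u +ᵥ η := (vsub_vadd φ η).symm
    rw [hφ, hθB]
  have hre : (inner ℂ (u - ξ) (u - ξ) : ℂ).re
      = (inner ℂ u u : ℂ).re - 2 * (inner ℂ ξ u : ℂ).re + (inner ℂ ξ ξ : ℂ).re := by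
    rw [inner_sub_sub_self]
    have : ((inner ℂ u ξ : ℂ)).re = ((inner ℂ ξ u : ℂ)).re := by
      rw [← inner_conj_symm u ξ, Complex.conj_re]
    simp only [Complex.add_re, Complex.sub_re, this]
    ring
  have him : (inner ℂ ξ u : ℂ).im = B ξ u - B u ξ := by
    have := hωB ξ u; linarith
  have hinner : (inner ℂ ξ u : ℂ)
      = (((inner ℂ ξ u : ℂ).re : ℝ) : ℂ) + ((B ξ u - B u ξ : ℝ) : ℂ) * Complex.I := by
    rw [← him]; push_cast; exact (Complex.re_add_im _).symm
  rw [h1, h2, h3, hinner, hre]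
  push_cast
  ring
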